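/- Let N ≥ 2 be an integer and ρ1, ρ2, ρ12 real numbers. The matrix Q(N,ρ1,ρ2,ρ12) is positive semidefinite if and only if ρ1 ≤ 1, ρ2 ≤ 1, 1+(N−1)ρ1 ≥ 0, 1+(N−1)ρ2 ≥ 0, and N²ρ12² ≤ (1+(N−1)ρ1)·(1+(N−1)ρ2). -/

import Mathlib

open Matrix

noncomputable section

/-- The all-ones matrix. -/
def J (a b : ℕ) : Matrix (Fin a) (Fin b) ℝ := Matrix.of fun _ _ => 1

/-- The structured correlation matrix of the symmetric 2-layer N-relay Gaussian network. -/
def Q (N : ℕ) (ρ1 ρ2 ρ12 : ℝ) : Matrix (Fin N ⊕ Fin N) (Fin N ⊕ Fin N) ℝ :=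
  Matrix.fromBlocks (ρ1 • J N N + (1 - ρ1) • 1) (ρ12 • J N N)
    (ρ12 • J N N) (ρ2 • J N N + (1 - ρ2) • 1)

lemma hsum1 (N : ℕ) (c : ℝ) (f g : Fin N → ℝ) :
    ∑ i, ∑ j, f i * (c * g j) = c * (∑ i, f i) * (∑ j, g j) := by
  simp only [mul_assoc, ← Finset.mul_sum, ← Finset.sum_mul]
  ring

lemma hsum2 (N : ℕ) (c : ℝ) (f g : Fin N → ℝ) :
    ∑ i, ∑ j, f i * ((if i = j then c else 0) * g j) = c * ∑ i, f i * g i := by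
  simp only [ite_mul, mul_ite, zero_mul, mul_zero, Finset.sum_ite_eq, Finset.mem_univ,
    if_true, Finset.mul_sum]
  exact Finset.sum_congr rfl fun i _ => by ring

lemma quad (N : ℕ) (ρ1 ρ2 ρ12 : ℝ) (x : Fin N ⊕ Fin N → ℝ) :
    dotProduct (star x) (Q N ρ1 ρ2 ρ12 *ᵥ x) =
      ρ1 * (∑ i, x (Sum.inl i))^2 + (1-ρ1) * (∑ i, x (Sum.inl i)^2)
      + ρ2 * (∑ i, x (Sum.inr i))^2 + (1-ρ2) * (∑ i, x (Sum.inr i)^2)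
      + 2*ρ12 * (∑ i, x (Sum.inl i)) * (∑ i, x (Sum.inr i)) := by
  simp only [star_trivial, dotProduct, mulVec, Fintype.sum_sum_type, Q, _root_.J,
    Matrix.fromBlocks, Matrix.add_apply, Matrix.smul_apply, Matrix.one_apply,
    Matrix.of_apply, Sum.elim_inl, Sum.elim_inr, smul_eq_mul, mul_ite, mul_one, mul_zero,
    add_mul, mul_add, Finset.sum_add_distrib, Finset.sum_ite_eq, Finset.mem_univ, if_true,
    Finset.mul_sum, Finset.sum_mul]
  simp only [hsum2]
  simp only [mul_assoc, ← Finset.mul_sum, ← Finset.sum_mul, ← pow_two]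
  ring

lemma sum_pair {N : ℕ} (i0 i1 : Fin N) (h : i0 ≠ i1) (a b : ℝ) :
    ∑ i, ((if i = i0 then a else 0) + (if i = i1 then b else 0)) = a + b := by
  simp [Finset.sum_add_distrib, Finset.sum_ite_eq']

lemma sum_pair_sq {N : ℕ} (i0 i1 : Fin N) (h : i0 ≠ i1) (a b : ℝ) :
    ∑ i, ((if i = i0 then a else 0) + (if i = i1 then b else 0))^2 = a^2 + b^2 := by
  have key : ∀ i, ((if i = i0 then a else 0) + (if i = i1 then b else 0))^2
      = (if i = i0 then a^2 else 0) + (if i = i1 then b^2 else 0) := by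
    intro i
    by_cases h0 : i = i0 <;> by_cases h1 : i = i1
    · exact absurd (h0 ▸ h1) (h0 ▸ h)
    · simp [h0, h1, h]
    · simp [h0, h1, Ne.symm h]
    · simp [h0, h1]
  simp [key, Finset.sum_add_distrib, Finset.sum_ite_eq']

lemma quadform_nonneg (A B C s t : ℝ) (hA : 0 ≤ A) (hB : 0 ≤ B) (h : C^2 ≤ A*B) :
    0 ≤ A*s^2 + 2*C*s*t + B*t^2 := by
  rcases eq_or_lt_of_le hA with h0 | h0
  · have hC : C = 0 := by nlinarith [sq_nonneg C]
    rw [hC, ← h0]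
    nlinarith [sq_nonneg t]
  · nlinarith [sq_nonneg (A*s + C*t), mul_nonneg (sub_nonneg.2 h) (sq_nonneg t)]

theorem stmt_1 (N : ℕ) (hN : 2 ≤ N) (ρ1 ρ2 ρ12 : ℝ) :
    (Q N ρ1 ρ2 ρ12).PosSemidef ↔
      ρ1 ≤ 1 ∧ ρ2 ≤ 1 ∧ 0 ≤ 1 + ((N : ℝ) - 1) * ρ1 ∧ 0 ≤ 1 + ((N : ℝ) - 1) * ρ2 ∧
        (N : ℝ) ^ 2 * ρ12 ^ 2 ≤ (1 + ((N : ℝ) - 1) * ρ1) * (1 + ((N : ℝ) - 1) * ρ2) := by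
  have hN0 : (0:ℝ) < N := by positivity
  have hi01 : (⟨0, by omega⟩ : Fin N) ≠ ⟨1, by omega⟩ := by simp [Fin.ext_iff]
  rw [Matrix.posSemidef_iff_dotProduct_mulVec]
  constructor
  · rintro ⟨-, hq⟩
    -- ρ1 ≤ 1
    have e1 : ρ1 ≤ 1 := by
      have := hq (Sum.elim
        (fun i => (if i = (⟨0, by omega⟩ : Fin N) then (1:ℝ) else 0)
          + (if i = (⟨1, by omega⟩ : Fin N) then (-1:ℝ) else 0)) 0)
      rw [quad] at this
      simp only [Sum.elim_inl, Sum.elim_inr, sum_pair _ _ hi01,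
        sum_pair_sq _ _ hi01, Pi.zero_apply, Finset.sum_const_zero] at this
      norm_num at this
      linarith
    have e2 : ρ2 ≤ 1 := by
      have := hq (Sum.elim (0 : Fin N → ℝ)
        (fun i => (if i = (⟨0, by omega⟩ : Fin N) then (1:ℝ) else 0)
          + (if i = (⟨1, by omega⟩ : Fin N) then (-1:ℝ) else 0)))
      rw [quad] at this
      simp only [Sum.elim_inl, Sum.elim_inr, sum_pair _ _ hi01,
        sum_pair_sq _ _ hi01, Pi.zero_apply, Finset.sum_const_zero] at this
      norm_num at this
      linarith
    -- key inequality for constant vectors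
    have key : ∀ t s : ℝ, 0 ≤ (1 + ((N:ℝ)-1)*ρ1)*t^2 + 2*((N:ℝ)*ρ12)*t*s
        + (1 + ((N:ℝ)-1)*ρ2)*s^2 := by
      intro t s
      have := hq (Sum.elim (fun _ => t) (fun _ => s))
      rw [quad] at this
      simp only [Sum.elim_inl, Sum.elim_inr, Finset.sum_const, Finset.card_univ,
        Fintype.card_fin, nsmul_eq_mul] at this
      nlinarith [this, hN0]
    have e3 : 0 ≤ 1 + ((N:ℝ)-1)*ρ1 := by nlinarith [key 1 0]
    have e4 : 0 ≤ 1 + ((N:ℝ)-1)*ρ2 := by nlinarith [key 0 1]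
    refine ⟨e1, e2, e3, e4, ?_⟩
    set A := 1 + ((N:ℝ)-1)*ρ1 with hAdef
    set B := 1 + ((N:ℝ)-1)*ρ2 with hBdef
    set C := (N:ℝ)*ρ12 with hCdef
    have goal' : C^2 ≤ A*B → (N:ℝ)^2*ρ12^2 ≤ A*B := by
      intro h; calc (N:ℝ)^2*ρ12^2 = C^2 := by rw [hCdef]; ring
        _ ≤ A*B := h
    apply goal'
    rcases eq_or_lt_of_le e3 with h0 | h0
    · rcases eq_or_ne C 0 with hC | hC
      · rw [hC, ← h0]; nlinarith
      · have := key (-(B+1)/(2*C)) 1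
        rw [← h0] at this
        have h2C : (2*C) ≠ 0 := by simpa using hC
        field_simp at this
        rw [le_div_iff₀ (by positivity)] at this
        nlinarith [this, sq_nonneg C]
    · nlinarith [key (-C) A, h0]
  · rintro ⟨h1, h2, h3, h4, h5⟩
    constructor
    · -- Hermitian
      have hJ : (J N N)ᴴ = J N N := by
        ext i j; simp [_root_.J, Matrix.conjTranspose_apply]
      have hJt : (J N N)ᵀ = J N N := by
        ext i j; simp [_root_.J, Matrix.transpose_apply]
      rw [Matrix.IsHermitian, Q, Matrix.fromBlocks_conjTranspose]
      simp [Matrix.conjTranspose_add, Matrix.conjTranspose_smul, hJ, hJt,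
        Matrix.conjTranspose_one, Matrix.transpose_one, star_trivial]
    · intro x
      rw [quad]
      set S1 := ∑ i, x (Sum.inl i) with hS1
      set S2 := ∑ i, x (Sum.inr i) with hS2
      set T1 := ∑ i, x (Sum.inl i)^2 with hT1
      set T2 := ∑ i, x (Sum.inr i)^2 with hT2
      have hc1 : S1^2 ≤ (N:ℝ) * T1 := by
        have := sq_sum_le_card_mul_sum_sq (s := (Finset.univ : Finset (Fin N)))
          (f := fun i => x (Sum.inl i))
        simpa [Finset.card_univ] using this
      have hc2 : S2^2 ≤ (N:ℝ) * T2 := by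
        have := sq_sum_le_card_mul_sum_sq (s := (Finset.univ : Finset (Fin N)))
          (f := fun i => x (Sum.inr i))
        simpa [Finset.card_univ] using this
      have hquad : 0 ≤ (1 + ((N:ℝ)-1)*ρ1)*S1^2 + 2*((N:ℝ)*ρ12)*S1*S2
          + (1 + ((N:ℝ)-1)*ρ2)*S2^2 := by
        apply quadform_nonneg _ _ _ _ _ h3 h4
        nlinarith [h5]
      have hkey : 0 ≤ (N:ℝ) * (ρ1*S1^2 + (1-ρ1)*T1 + ρ2*S2^2 + (1-ρ2)*T2
          + 2*ρ12*S1*S2) := by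
        have expand : (N:ℝ) * (ρ1*S1^2 + (1-ρ1)*T1 + ρ2*S2^2 + (1-ρ2)*T2 + 2*ρ12*S1*S2)
            = (1-ρ1)*((N:ℝ)*T1 - S1^2) + (1-ρ2)*((N:ℝ)*T2 - S2^2)
              + ((1 + ((N:ℝ)-1)*ρ1)*S1^2 + 2*((N:ℝ)*ρ12)*S1*S2
                + (1 + ((N:ℝ)-1)*ρ2)*S2^2) := by ring
        rw [expand]
        have t1 : 0 ≤ (1-ρ1)*((N:ℝ)*T1 - S1^2) :=
          mul_nonneg (by linarith) (by linarith)
        have t2 : 0 ≤ (1-ρ2)*((N:ℝ)*T2 - S2^2) :=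
          mul_nonneg (by linarith) (by linarith)
        linarith
      nlinarith [hkey, hN0, mul_pos hN0 hN0]
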